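/- Let 1 < p < ∞ and let w be a weight on ℝ with σ := w^{1−p'} locally integrable. Then ‖S‖_{L^p(w)→L^{p,∞}(w)} ≥ [w]_{A_p}^{1/p}, where S is the Haar square function and [w]_{A_p} is taken over dyadic intervals. -/

import Mathlib

open MeasureTheory ENNReal NNReal Set

noncomputable section

namespace Paper1D

/-- The dyadic interval `[2^{-k} m, 2^{-k}(m+1))`. -/
def dyadicI (k m : ℤ) : Set ℝ := Set.Ico ((2:ℝ) ^ (-k) * m) ((2:ℝ) ^ (-k) * (m + 1))

/-- The Haar function `h_I = |I|^{-1/2} (1_{I_-} - 1_{I_+})` of the dyadic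
interval `I = [2^{-k} m, 2^{-k}(m+1))`. -/
def haar (k m : ℤ) (x : ℝ) : ℝ :=
  (2:ℝ) ^ ((k : ℝ) / 2) *
    (Set.indicator (Set.Ico ((2:ℝ) ^ (-k) * m) ((2:ℝ) ^ (-k) * (m + 1/2))) (fun _ => (1:ℝ)) x
      - Set.indicator (Set.Ico ((2:ℝ) ^ (-k) * (m + 1/2)) ((2:ℝ) ^ (-k) * (m + 1))) (fun _ => (1:ℝ)) x)

/-- The Haar square function `Sf = (∑_I (1_I/|I|) |⟨h_I, f⟩|²)^{1/2}`. -/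
def haarSq (f : ℝ → ℝ) (x : ℝ) : ℝ≥0∞ :=
  (∑' km : ℤ × ℤ, (dyadicI km.1 km.2).indicator
      (fun _ => (volume (dyadicI km.1 km.2))⁻¹ *
        (‖∫ y, haar km.1 km.2 y * f y‖₊ : ℝ≥0∞) ^ 2) x) ^ (1/2 : ℝ)

/-- `‖f‖_{L^p(w)} = (∫ |f|^p w)^{1/p}`. -/
def lpNorm1 (p : ℝ) (w : ℝ → ℝ≥0∞) (f : ℝ → ℝ) : ℝ≥0∞ :=
  (∫⁻ x, (‖f x‖₊ : ℝ≥0∞) ^ p * w x) ^ (1/p)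

/-- `‖g‖_{L^{p,∞}(w)} = sup_{t>0} t · w({g > t})^{1/p}`. -/
def wLpNorm1 (p : ℝ) (w : ℝ → ℝ≥0∞) (g : ℝ → ℝ≥0∞) : ℝ≥0∞ :=
  ⨆ (t : ℝ≥0) (_ : 0 < t), (t : ℝ≥0∞) * (∫⁻ x in {x | (t : ℝ≥0∞) < g x}, w x) ^ (1/p)

/-- `‖S‖_{L^p(w) → L^{p,∞}(w)}`, the least constant `C` such that
`‖Sf‖_{L^{p,∞}(w)} ≤ C ‖f‖_{L^p(w)}` for all `f ∈ L^p(w)`. -/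
def sqOpNorm (p : ℝ) (w : ℝ → ℝ≥0∞) : ℝ≥0∞ :=
  sInf {C : ℝ≥0∞ | ∀ f : ℝ → ℝ, Measurable f → lpNorm1 p w f ≠ ∞ →
    wLpNorm1 p w (haarSq f) ≤ C * lpNorm1 p w f}

/-- Average `⟨w⟩_I = |I|⁻¹ ∫_I w`. -/
def avg1 (w : ℝ → ℝ≥0∞) (I : Set ℝ) : ℝ≥0∞ := (volume I)⁻¹ * ∫⁻ x in I, w x

/-- The dyadic `A_p` characteristic, with the dual weight `σ = w^{1-p'}`. -/
def Ap1 (p : ℝ) (w : ℝ → ℝ≥0∞) : ℝ≥0∞ :=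
  ⨆ km : ℤ × ℤ, avg1 w (dyadicI km.1 km.2) *
    (avg1 (fun x => (w x) ^ (1 - p / (p - 1))) (dyadicI km.1 km.2)) ^ (p - 1)


lemma pow_helper {p : ℝ} (hp0 : 0 < p) (x y : ℝ≥0∞) : (x * y ^ (1/p)) ^ p = x ^ p * y := by
  rw [ENNReal.mul_rpow_of_nonneg _ _ hp0.le, ← ENNReal.rpow_mul,
    one_div, inv_mul_cancel₀ hp0.ne', ENNReal.rpow_one]

lemma prod_eq (c : ℝ) (s : ℝ → ℝ) (lo mid hi : ℝ) (h1 : lo ≤ mid) (h2 : mid ≤ hi) (y : ℝ) :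
    (c * (Set.indicator (Set.Ico lo mid) (fun _ => (1:ℝ)) y
        - Set.indicator (Set.Ico mid hi) (fun _ => (1:ℝ)) y))
      * (s y * (Set.indicator (Set.Ico lo mid) (fun _ => (1:ℝ)) y
        - Set.indicator (Set.Ico mid hi) (fun _ => (1:ℝ)) y))
    = c * Set.indicator (Set.Ico lo hi) s y := by
  by_cases ha : y ∈ Set.Ico lo mid
  · have hb : y ∉ Set.Ico mid hi := fun h => absurd ha.2 (not_lt.mpr h.1)
    have hy : y ∈ Set.Ico lo hi := ⟨ha.1, lt_of_lt_of_le ha.2 h2⟩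
    rw [Set.indicator_of_mem ha, Set.indicator_of_notMem hb, Set.indicator_of_mem hy]; ring
  · by_cases hb : y ∈ Set.Ico mid hi
    · have hy : y ∈ Set.Ico lo hi := ⟨le_trans h1 hb.1, hb.2⟩
      rw [Set.indicator_of_mem hb, Set.indicator_of_notMem ha, Set.indicator_of_mem hy]; ring
    · have hy : y ∉ Set.Ico lo hi := by
        intro h; rcases lt_or_ge y mid with h' | h'
        exacts [ha ⟨h.1, h'⟩, hb ⟨h', h.2⟩]
      rw [Set.indicator_of_notMem ha, Set.indicator_of_notMem hb,
        Set.indicator_of_notMem hy]; ring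

lemma abs_g_one (lo mid hi : ℝ) (hlo : lo ≤ mid) (y : ℝ) (hy : y ∈ Set.Ico lo hi) :
    |Set.indicator (Set.Ico lo mid) (fun _ => (1:ℝ)) y
      - Set.indicator (Set.Ico mid hi) (fun _ => (1:ℝ)) y| = 1 := by
  by_cases ha : y ∈ Set.Ico lo mid
  · have hb : y ∉ Set.Ico mid hi := fun h => absurd ha.2 (not_lt.mpr h.1)
    rw [Set.indicator_of_mem ha, Set.indicator_of_notMem hb]; norm_num
  · have hb : y ∈ Set.Ico mid hi := ⟨le_of_not_gt fun h' => ha ⟨hy.1, h'⟩, hy.2⟩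
    rw [Set.indicator_of_mem hb, Set.indicator_of_notMem ha]; norm_num

lemma g_zero (lo mid hi : ℝ) (h1 : lo ≤ mid) (h2 : mid ≤ hi) (y : ℝ) (hy : y ∉ Set.Ico lo hi) :
    Set.indicator (Set.Ico lo mid) (fun _ => (1:ℝ)) y
      - Set.indicator (Set.Ico mid hi) (fun _ => (1:ℝ)) y = 0 := by
  have ha : y ∉ Set.Ico lo mid := fun h => hy ⟨h.1, lt_of_lt_of_le h.2 h2⟩
  have hb : y ∉ Set.Ico mid hi := fun h => hy ⟨le_trans h1 h.1, h.2⟩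
  rw [Set.indicator_of_notMem ha, Set.indicator_of_notMem hb, sub_zero]

/-- Proposition 5.1: `‖S‖_{L^p(w)→L^{p,∞}(w)} ≥ [w]_{A_p}^{1/p}` for every weight `w`. -/
theorem statement16 (p : ℝ) (hp : 1 < p) (w : ℝ → ℝ≥0∞) (hw : Measurable w)
    (hwloc : ∀ k m : ℤ, (∫⁻ x in dyadicI k m, w x) < ∞)
    (hσloc : ∀ k m : ℤ, (∫⁻ x in dyadicI k m, (w x) ^ (1 - p / (p - 1))) < ∞) :
    (Ap1 p w) ^ (1 / p) ≤ sqOpNorm p w := by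
  have hp0 : (0:ℝ) < p := lt_trans one_pos hp
  have hp0' : p ≠ 0 := hp0.ne'
  have hp1 : (0:ℝ) < p - 1 := by linarith
  set e : ℝ := 1 - p / (p - 1) with he
  have he_neg : e < 0 := by
    have : 1 < p / (p - 1) := (one_lt_div hp1).mpr (by linarith)
    rw [he]; linarith
  have hep : e * p + 1 = e := by
    rw [he]; field_simp; ring
  refine le_sInf fun C hC => ?_
  simp only [Set.mem_setOf_eq] at hC
  have key : ∀ k m : ℤ, avg1 w (dyadicI k m) *
      (avg1 (fun x => (w x) ^ e) (dyadicI k m)) ^ (p - 1) ≤ C ^ p := by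
    intro k m
    -- notation
    set I : Set ℝ := dyadicI k m with hIdef
    have hmeasI : MeasurableSet I := measurableSet_Ico
    set A : ℝ≥0∞ := ∫⁻ x in I, w x ^ e with hA
    have hA_ne : A ≠ ∞ := (hσloc k m).ne
    set B : ℝ≥0∞ := (volume I)⁻¹ * A with hB
    have h2k : (0:ℝ) < (2:ℝ) ^ (-k) := zpow_pos (by norm_num) _
    have hlomid : (2:ℝ) ^ (-k) * m ≤ (2:ℝ) ^ (-k) * (m + 1/2) := by nlinarith
    have hmidhi : (2:ℝ) ^ (-k) * (m + 1/2) ≤ (2:ℝ) ^ (-k) * (m + 1) := by nlinarith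
    have hvol : volume I = ENNReal.ofReal ((2:ℝ) ^ (-k)) := by
      rw [hIdef, dyadicI, Real.volume_Ico]; congr 1; ring
    have hV0 : volume I ≠ 0 := by rw [hvol]; exact (ENNReal.ofReal_pos.mpr h2k).ne' 
    have hVtop : volume I ≠ ∞ := by rw [hvol]; exact ENNReal.ofReal_ne_top
    -- test function
    set s : ℝ → ℝ := fun x => ((w x) ^ e).toReal with hs
    have hs_meas : Measurable s := (hw.pow_const e).ennreal_toReal
    have hs_nonneg : ∀ x, 0 ≤ s x := fun x => ENNReal.toReal_nonneg
    set f : ℝ → ℝ := fun x => s x *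
        (Set.indicator (Set.Ico ((2:ℝ) ^ (-k) * m) ((2:ℝ) ^ (-k) * (m + 1/2))) (fun _ => (1:ℝ)) x
          - Set.indicator (Set.Ico ((2:ℝ) ^ (-k) * (m + 1/2)) ((2:ℝ) ^ (-k) * (m + 1))) (fun _ => (1:ℝ)) x)
      with hfdef
    have hf_meas : Measurable f := by
      refine hs_meas.mul (Measurable.sub ?_ ?_) <;>
        exact measurable_const.indicator measurableSet_Ico
    -- a.e. finiteness of σ on I
    have haeI : ∀ᵐ x, x ∈ I → w x ^ e ≠ ∞ := by
      have h1 : ∀ᵐ x ∂(volume.restrict I), w x ^ e < ∞ :=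
        ae_lt_top (hw.pow_const e) (hσloc k m).ne
      exact (ae_restrict_iff' hmeasI).mp (h1.mono fun x hx => hx.ne)
    have hIco : I = Set.Ico ((2:ℝ) ^ (-k) * m) ((2:ℝ) ^ (-k) * (m + 1)) := rfl
    -- Lp norm of f
    have hnorm_ae : ∀ᵐ x, (‖f x‖₊ : ℝ≥0∞) ^ p * w x = I.indicator (fun x => w x ^ e) x := by
      filter_upwards [haeI] with x hx
      by_cases hxI : x ∈ I
      · have hσx : w x ^ e ≠ ∞ := hx hxI
        have hfx : (‖f x‖₊ : ℝ≥0∞) = w x ^ e := by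
          have habs : |f x| = s x := by
            rw [hfdef]; simp only [abs_mul, abs_of_nonneg (hs_nonneg x),
              abs_g_one _ _ _ hlomid x (hIco ▸ hxI), mul_one]
          rw [← enorm_eq_nnnorm, Real.enorm_eq_ofReal_abs, habs]
          exact ENNReal.ofReal_toReal hσx
        rw [hfx, Set.indicator_of_mem hxI]
        have hwx0 : w x ≠ 0 := by
          intro h0
          exact hσx (by rw [h0, ENNReal.zero_rpow_of_neg he_neg])
        by_cases hwtop : w x = ∞
        · rw [hwtop, ENNReal.top_rpow_of_neg he_neg, ENNReal.zero_rpow_of_pos hp0]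
          simp
        · calc (w x ^ e) ^ p * w x = w x ^ (e * p) * w x ^ (1:ℝ) := by
                rw [← ENNReal.rpow_mul, ENNReal.rpow_one]
            _ = w x ^ (e * p + 1) := (ENNReal.rpow_add _ _ hwx0 hwtop).symm
            _ = w x ^ e := by rw [hep]
      · have hfx0 : f x = 0 := by
          have hg := g_zero _ _ _ hlomid hmidhi x (hIco ▸ hxI)
          simp only [hfdef, hg, mul_zero]
        rw [hfx0, Set.indicator_of_notMem hxI]
        simp [ENNReal.zero_rpow_of_pos hp0]
    have hlp : lpNorm1 p w f = A ^ (1/p) := by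
      rw [lpNorm1, lintegral_congr_ae hnorm_ae, lintegral_indicator hmeasI]
    have hlp_ne : lpNorm1 p w f ≠ ∞ := by
      rw [hlp]
      exact (ENNReal.rpow_lt_top_of_nonneg (by positivity) hA_ne).ne
    -- the Haar coefficient on I
    have hint : ∫ y, haar k m y * f y = (2:ℝ) ^ ((k:ℝ)/2) * A.toReal := by
      have hpt : ∀ y, haar k m y * f y = (2:ℝ) ^ ((k:ℝ)/2) * I.indicator s y := by
        intro y
        rw [haar, hfdef, hIco]
        exact prod_eq _ s _ _ _ hlomid hmidhi y
      calc ∫ y, haar k m y * f y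
          = ∫ y, (2:ℝ) ^ ((k:ℝ)/2) * I.indicator s y :=
            integral_congr_ae (Filter.Eventually.of_forall hpt)
        _ = (2:ℝ) ^ ((k:ℝ)/2) * ∫ y, I.indicator s y := integral_const_mul _ _
        _ = (2:ℝ) ^ ((k:ℝ)/2) * ∫ y in I, s y := by rw [integral_indicator hmeasI]
        _ = (2:ℝ) ^ ((k:ℝ)/2) * A.toReal := by
            rw [hA, integral_toReal ((hw.pow_const e).aemeasurable)
              (ae_lt_top (hw.pow_const e) (hσloc k m).ne)]
    have hc2 : ((2:ℝ) ^ ((k:ℝ)/2)) ^ (2:ℕ) = (2:ℝ) ^ (k:ℤ) := by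
      rw [← Real.rpow_natCast ((2:ℝ) ^ ((k:ℝ)/2)) 2, ← Real.rpow_mul (by norm_num)]
      rw [← Real.rpow_intCast (2:ℝ) k]
      norm_num
    have hVinv : (volume I)⁻¹ = ENNReal.ofReal ((2:ℝ) ^ (k:ℤ)) := by
      rw [hvol, ← ENNReal.ofReal_inv_of_pos h2k, ← zpow_neg, neg_neg]
    have hcoef : (volume I)⁻¹ * (‖∫ y, haar k m y * f y‖₊ : ℝ≥0∞) ^ 2 = B ^ 2 := by
      have hnn : (0:ℝ) ≤ (2:ℝ) ^ ((k:ℝ)/2) * A.toReal := by positivity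
      rw [hint, ← enorm_eq_nnnorm, Real.enorm_eq_ofReal hnn,
        ENNReal.ofReal_mul (by positivity), ENNReal.ofReal_toReal hA_ne]
      rw [mul_pow, ← ENNReal.ofReal_pow (by positivity), hc2, ← hVinv, hB]
      ring
    -- pointwise lower bound on I
    have hSlow : ∀ x ∈ I, B ≤ haarSq f x := by
      intro x hxI
      have h1 : B ^ (2:ℕ) ≤ ∑' km : ℤ × ℤ, (dyadicI km.1 km.2).indicator
          (fun _ => (volume (dyadicI km.1 km.2))⁻¹ *
            (‖∫ y, haar km.1 km.2 y * f y‖₊ : ℝ≥0∞) ^ 2) x := by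
        have h2 := ENNReal.le_tsum (f := fun km : ℤ × ℤ => (dyadicI km.1 km.2).indicator
          (fun _ => (volume (dyadicI km.1 km.2))⁻¹ *
            (‖∫ y, haar km.1 km.2 y * f y‖₊ : ℝ≥0∞) ^ 2) x) (k, m)
        rwa [Set.indicator_of_mem hxI, hcoef] at h2
      have h3 : (B ^ (2:ℕ)) ^ (1/2:ℝ) = B := by
        rw [← ENNReal.rpow_natCast B 2, ← ENNReal.rpow_mul]
        norm_num
      calc B = (B ^ (2:ℕ)) ^ (1/2:ℝ) := h3.symm
        _ ≤ haarSq f x := by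
          rw [haarSq]
          exact ENNReal.rpow_le_rpow h1 (by norm_num)
    -- main weak-type estimate
    have hCineq := hC f hf_meas hlp_ne
    rw [hlp] at hCineq
    have hmain : B * (∫⁻ x in I, w x) ^ (1/p) ≤ C * A ^ (1/p) := by
      set W : ℝ≥0∞ := (∫⁻ x in I, w x) ^ (1/p) with hW
      have hWtop : W ≠ ∞ :=
        (ENNReal.rpow_lt_top_of_nonneg (by positivity) (hwloc k m).ne).ne
      rcases eq_or_ne W 0 with h0 | hW0
      · rw [h0, mul_zero]; exact zero_le
      rw [← ENNReal.le_div_iff_mul_le (Or.inl hW0) (Or.inl hWtop)]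
      refine ENNReal.le_of_forall_nnreal_lt fun r hr => ?_
      rw [ENNReal.le_div_iff_mul_le (Or.inl hW0) (Or.inl hWtop)]
      rcases eq_or_ne r 0 with rfl | hr0
      · simp
      have hrpos : 0 < r := lt_of_le_of_ne zero_le (Ne.symm hr0)
      have hsub : I ⊆ {x | (r:ℝ≥0∞) < haarSq f x} := fun x hx =>
        lt_of_lt_of_le hr (hSlow x hx)
      have hstep : (r:ℝ≥0∞) * W ≤ wLpNorm1 p w (haarSq f) := by
        calc (r:ℝ≥0∞) * W
            ≤ (r:ℝ≥0∞) * (∫⁻ x in {x | (r:ℝ≥0∞) < haarSq f x}, w x) ^ (1/p) := by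
              rw [hW]
              exact mul_le_mul_right
                (ENNReal.rpow_le_rpow (lintegral_mono_set hsub) (by positivity)) _
          _ ≤ wLpNorm1 p w (haarSq f) := by
              rw [wLpNorm1]
              exact le_iSup₂ (f := fun (t:ℝ≥0) (_ : 0 < t) => (t:ℝ≥0∞) *
                (∫⁻ x in {x | (t:ℝ≥0∞) < haarSq f x}, w x) ^ (1/p)) r hrpos
      exact hstep.trans hCineq
    -- conclude the per-interval bound
    rcases eq_or_ne A 0 with hA0 | hA0
    · have hBz : avg1 (fun x => (w x) ^ e) I = 0 := by
        rw [avg1, ← hA, hA0, mul_zero]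
      rw [hBz, ENNReal.zero_rpow_of_pos hp1, mul_zero]
      exact zero_le
    · have hB0 : B ≠ 0 := by
        rw [hB]
        exact mul_ne_zero (ENNReal.inv_ne_zero.mpr hVtop) hA0
      have hBtop : B ≠ ∞ := by
        rw [hB]
        exact ENNReal.mul_ne_top (ENNReal.inv_ne_top.mpr hV0) hA_ne
      have h2 : B ^ p * (∫⁻ x in I, w x) ≤ C ^ p * A := by
        calc B ^ p * (∫⁻ x in I, w x) = (B * (∫⁻ x in I, w x) ^ (1/p)) ^ p :=
              (pow_helper hp0 B _).symm
          _ ≤ (C * A ^ (1/p)) ^ p := ENNReal.rpow_le_rpow hmain hp0.le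
          _ = C ^ p * A := pow_helper hp0 C A
      have h3 : B ^ p = B ^ (p-1) * B := by
        conv_lhs => rw [show p = (p-1) + 1 by ring]
        rw [ENNReal.rpow_add _ _ hB0 hBtop, ENNReal.rpow_one]
      have h4 : (avg1 w I * (avg1 (fun x => (w x) ^ e) I) ^ (p-1)) * A ≤ (C ^ p) * A := by
        calc (avg1 w I * (avg1 (fun x => (w x) ^ e) I) ^ (p-1)) * A
            = B ^ p * (∫⁻ x in I, w x) := by
              rw [avg1, avg1, ← hA, ← hB, h3, hB]; ring
          _ ≤ (C ^ p) * A := h2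
      exact (ENNReal.mul_le_mul_iff_left hA0 hA_ne).mp h4
  have h1 : Ap1 p w ≤ C ^ p := by
    rw [Ap1]
    exact iSup_le fun km => by simpa only [← he] using key km.1 km.2
  calc (Ap1 p w) ^ (1/p) ≤ (C ^ p) ^ (1/p) := ENNReal.rpow_le_rpow h1 (by positivity)
    _ = C := by rw [← ENNReal.rpow_mul, mul_one_div, div_self hp0', ENNReal.rpow_one]

end Paper1D
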